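/- Let ℓ ≥ 3 be an integer and let S be an ℓ-sparse finite collection of bundles of Fin m. Then: (i) for every bundle X ⊆ Fin m, v_S^ℓ(X) + v_S^ℓ(Xᶜ) = ℓ; and (ii) for every nonempty member S ∈ S, v_S^ℓ(S) = 1 and v_S^ℓ(Sᶜ) = ℓ − 1. -/
import Mathlib


/-- A collection of bundles of `Fin m`, indexed by `ι`, is `ℓ`-sparse if the union of any
`ℓ - 1` (not necessarily distinct) members is not all of `Fin m`. -/
def Sparse (m ℓ : ℕ) {ι : Type*} (S : ι → Finset (Fin m)) : Prop :=
  ∀ g : Fin (ℓ - 1) → ι,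
    (Finset.univ.sup fun t => S (g t)) ≠ (Finset.univ : Finset (Fin m))

/-- The cover number `σ_S(X)`: the least number of members of the collection `S` needed to
cover `X`, if `X` is contained in the union of all members, and `max ℓ d` otherwise (where
`d` is the number of members). -/
noncomputable def coverNum (m ℓ : ℕ) {ι : Type*} [Fintype ι]
    (S : ι → Finset (Fin m)) (X : Finset (Fin m)) : ℕ :=
  if X ⊆ Finset.univ.sup S then
    sInf {n | ∃ Y : Finset ι, X ⊆ Y.sup S ∧ Y.card = n}
  else max ℓ (Fintype.card ι)

/-- The modified set-cover valuation `v_S^ℓ`. -/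
noncomputable def vSl (m ℓ : ℕ) {ι : Type*} [Fintype ι]
    (S : ι → Finset (Fin m)) (X : Finset (Fin m)) : ℝ :=
  if (coverNum m ℓ S X : ℝ) < (ℓ : ℝ) / 2 then (coverNum m ℓ S X : ℝ)
  else if (coverNum m ℓ S Xᶜ : ℝ) < (ℓ : ℝ) / 2 then (ℓ : ℝ) - (coverNum m ℓ S Xᶜ : ℝ)
  else (ℓ : ℝ) / 2

/-- No set of at most `ℓ - 1` members of a sparse collection covers everything. -/
lemma sparse_no_small_cover (m ℓ d : ℕ) (hm : 0 < m) (hℓ : 3 ≤ ℓ)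
    (S : Fin d → Finset (Fin m)) (hS : Sparse m ℓ S)
    (Y : Finset (Fin d)) (hY : (Finset.univ : Finset (Fin m)) ⊆ Y.sup S) :
    ℓ - 1 < Y.card := by
  by_contra h
  push_neg at h
  have hx0 : (⟨0, hm⟩ : Fin m) ∈ Y.sup S := hY (Finset.mem_univ _)
  obtain ⟨y₀, hy₀, _⟩ := Finset.mem_sup.mp hx0
  set e := Y.equivFin
  set g : Fin (ℓ - 1) → Fin d := fun t =>
    if h : (t : ℕ) < Y.card then ((e.symm ⟨t, h⟩ : Y) : Fin d) else y₀ with hg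
  apply hS g
  apply Finset.eq_univ_of_forall
  intro x
  obtain ⟨y, hy, hxy⟩ := Finset.mem_sup.mp (hY (Finset.mem_univ x))
  have hcard : ((e ⟨y, hy⟩ : Fin Y.card) : ℕ) < ℓ - 1 :=
    lt_of_lt_of_le (e ⟨y, hy⟩).isLt h
  refine Finset.mem_sup.mpr ⟨⟨(e ⟨y, hy⟩ : Fin Y.card), hcard⟩, Finset.mem_univ _, ?_⟩
  have : g ⟨(e ⟨y, hy⟩ : Fin Y.card), hcard⟩ = y := by
    simp [hg, (e ⟨y, hy⟩).isLt]
  rw [this]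
  exact hxy

lemma coverNum_add_compl_ge (m ℓ d : ℕ) (hm : 0 < m) (hℓ : 3 ≤ ℓ)
    (S : Fin d → Finset (Fin m)) (hS : Sparse m ℓ S) (X : Finset (Fin m)) :
    ℓ ≤ coverNum m ℓ S X + coverNum m ℓ S Xᶜ := by
  unfold coverNum
  split_ifs with h1 h2 h2
  · have hne1 : {n | ∃ Y : Finset (Fin d), X ⊆ Y.sup S ∧ Y.card = n}.Nonempty :=
      ⟨(Finset.univ : Finset (Fin d)).card, Finset.univ, h1, rfl⟩
    have hne2 : {n | ∃ Y : Finset (Fin d), Xᶜ ⊆ Y.sup S ∧ Y.card = n}.Nonempty :=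
      ⟨(Finset.univ : Finset (Fin d)).card, Finset.univ, h2, rfl⟩
    obtain ⟨Y₁, hY₁, hc₁⟩ := Nat.sInf_mem hne1
    obtain ⟨Y₂, hY₂, hc₂⟩ := Nat.sInf_mem hne2
    have hcover : (Finset.univ : Finset (Fin m)) ⊆ (Y₁ ∪ Y₂).sup S := by
      intro x _
      by_cases hx : x ∈ X
      · obtain ⟨y, hy, hxy⟩ := Finset.mem_sup.mp (hY₁ hx)
        exact Finset.mem_sup.mpr ⟨y, Finset.mem_union_left _ hy, hxy⟩
      · obtain ⟨y, hy, hxy⟩ := Finset.mem_sup.mp (hY₂ (Finset.mem_compl.mpr hx))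
        exact Finset.mem_sup.mpr ⟨y, Finset.mem_union_right _ hy, hxy⟩
    have h3 := sparse_no_small_cover m ℓ d hm hℓ S hS _ hcover
    have h4 : (Y₁ ∪ Y₂).card ≤ Y₁.card + Y₂.card := Finset.card_union_le _ _
    omega
  · have : ℓ ≤ max ℓ (Fintype.card (Fin d)) := le_max_left _ _
    omega
  · have : ℓ ≤ max ℓ (Fintype.card (Fin d)) := le_max_left _ _
    omega
  · have : ℓ ≤ max ℓ (Fintype.card (Fin d)) := le_max_left _ _
    omega

lemma coverNum_member (m ℓ d : ℕ) (S : Fin d → Finset (Fin m)) (i : Fin d)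
    (hne : (S i).Nonempty) : coverNum m ℓ S (S i) = 1 := by
  have hsub : S i ⊆ Finset.univ.sup S := Finset.le_sup (Finset.mem_univ i)
  unfold coverNum
  rw [if_pos hsub]
  have h1 : 1 ∈ {n | ∃ Y : Finset (Fin d), S i ⊆ Y.sup S ∧ Y.card = n} := by
    refine ⟨{i}, ?_, Finset.card_singleton i⟩
    simp
  have h0 : 0 ∉ {n | ∃ Y : Finset (Fin d), S i ⊆ Y.sup S ∧ Y.card = n} := by
    rintro ⟨Y, hY, hc⟩
    rw [Finset.card_eq_zero] at hc
    subst hc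
    simp only [Finset.sup_empty, Finset.bot_eq_empty, Finset.subset_empty] at hY
    exact hne.ne_empty hY
  have hle := Nat.sInf_le h1
  have hpos : 0 < sInf {n | ∃ Y : Finset (Fin d), S i ⊆ Y.sup S ∧ Y.card = n} := by
    rcases Nat.eq_zero_or_pos (sInf {n | ∃ Y : Finset (Fin d), S i ⊆ Y.sup S ∧ Y.card = n})
      with h | h
    · exact absurd (h ▸ Nat.sInf_mem ⟨1, h1⟩) h0
    · exact h
  omega

/-- For an `ℓ`-sparse finite collection `S` of bundles of `Fin m` with `ℓ ≥ 3`: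
(i) `v_S^ℓ(X) + v_S^ℓ(Xᶜ) = ℓ` for every bundle `X`; and
(ii) `v_S^ℓ(S_i) = 1` and `v_S^ℓ((S_i)ᶜ) = ℓ − 1` for every nonempty member `S_i` of `S`. -/
theorem vSl_add_compl_and_members
    (m ℓ d : ℕ) (hm : 0 < m) (hℓ : 3 ≤ ℓ)
    (S : Fin d → Finset (Fin m)) (hS : Sparse m ℓ S) :
    (∀ X : Finset (Fin m), vSl m ℓ S X + vSl m ℓ S Xᶜ = (ℓ : ℝ)) ∧
    (∀ i : Fin d, (S i).Nonempty →
      vSl m ℓ S (S i) = 1 ∧ vSl m ℓ S ((S i)ᶜ) = (ℓ : ℝ) - 1) := by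
  have hℓR : (3 : ℝ) ≤ (ℓ : ℝ) := by exact_mod_cast hℓ
  have key : ∀ X : Finset (Fin m),
      (ℓ : ℝ) ≤ (coverNum m ℓ S X : ℝ) + (coverNum m ℓ S Xᶜ : ℝ) := by
    intro X
    have := coverNum_add_compl_ge m ℓ d hm hℓ S hS X
    exact_mod_cast this
  constructor
  · intro X
    unfold vSl
    simp only [compl_compl]
    have hk := key X
    split_ifs with h1 h2 h3 h4 <;> linarith
  · intro i hne
    have hc : coverNum m ℓ S (S i) = 1 := coverNum_member m ℓ d S i hne
    have hk := key (S i)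
    have h1 : (coverNum m ℓ S (S i) : ℝ) < (ℓ : ℝ) / 2 := by
      rw [hc]; push_cast; linarith
    have h2 : ¬ ((coverNum m ℓ S (S i)ᶜ : ℝ) < (ℓ : ℝ) / 2) := by
      rw [hc] at hk; push_cast at hk; linarith
    constructor
    · unfold vSl
      rw [if_pos h1, hc]
      norm_num
    · unfold vSl
      simp only [compl_compl]
      rw [if_neg h2, if_pos h1, hc]
      norm_num
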